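/- Let p be an odd prime and m ≥ 2 an integer with p | m. Then Ψ_{pm}(x) = Ψ_m(x·Ψ_{2p}(x)) as polynomials in ℤ[x]. -/

import Mathlib

open Polynomial

/-- The Fibonacci polynomials: `F 1 = 1`, `F 2 = X`, `F (n+2) = X * F (n+1) + F n`. -/
noncomputable def fibPoly : ℕ → Polynomial ℤ
  | 0 => 0
  | 1 => 1
  | n + 2 => X * fibPoly (n + 1) + fibPoly n

lemma fib0 : fibPoly 0 = 0 := rfl
lemma fib1 : fibPoly 1 = 1 := rfl
lemma fib2 : fibPoly 2 = X := by
  show X * fibPoly 1 + fibPoly 0 = X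
  rw [fib1, fib0]; ring
lemma fibS (n : ℕ) : fibPoly (n+2) = X * fibPoly (n+1) + fibPoly n := rfl

lemma fib_add (n : ℕ) : ∀ m, fibPoly (m + n + 1) =
    fibPoly (m+1) * fibPoly (n+1) + fibPoly m * fibPoly n := by
  intro m
  induction m using Nat.strong_induction_on with
  | _ m ih =>
    match m with
    | 0 => simp [fib0, fib1]
    | 1 => linear_combination fibS n - fibPoly (n+1) * fib2 - fibPoly n * fib1
        + congrArg fibPoly (show 1+n+1 = n+2 by omega)
    | (m+2) =>
      have h1 := ih m (by omega)
      have h2 := ih (m+1) (by omega)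
      linear_combination fibS (m+n+1) + X*h2 + h1 - fibPoly (n+1) * fibS (m+1)
        - fibPoly n * fibS m + congrArg fibPoly (show m+2+n+1 = m+n+1+2 by omega)
        + X * congrArg fibPoly (show m+n+1+1 = m+1+n+1 by omega)

lemma fib_cassini : ∀ n : ℕ, fibPoly (n+1)^2 = fibPoly (n+2) * fibPoly n + (-1:Polynomial ℤ)^n := by
  intro n
  induction n with
  | zero => simp [fib0, fib1]
  | succ n ih =>
    rw [pow_succ]
    linear_combination fibPoly (n+2) * fibS n - ih - fibPoly (n+1) * fibS (n+1)

lemma fib_two_mul (n : ℕ) :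
    fibPoly (2*(n+1)) = (fibPoly (n+2) + fibPoly n) * fibPoly (n+1) := by
  linear_combination fib_add n (n+1) + congrArg fibPoly (show 2*(n+1) = n+1+n+1 by omega)

lemma fib_two_mul_add_one (n : ℕ) :
    fibPoly (2*(n+1)+1) = (fibPoly (n+2) + fibPoly n) * fibPoly (n+2) + (-1:Polynomial ℤ)^n := by
  linear_combination fib_add (n+1) (n+1) + fib_cassini n
    + congrArg fibPoly (show 2*(n+1)+1 = n+1+(n+1)+1 by omega)

lemma fib_monic_deg : ∀ n : ℕ, (fibPoly (n+1)).Monic ∧ (fibPoly (n+1)).degree = n := by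
  intro n
  induction n using Nat.strong_induction_on with
  | _ n ih =>
    match n with
    | 0 => exact ⟨monic_one, degree_one⟩
    | 1 => rw [fib2]; exact ⟨monic_X, degree_X⟩
    | (n+2) =>
      obtain ⟨hm1, hd1⟩ := ih (n+1) (by omega)
      obtain ⟨hm0, hd0⟩ := ih n (by omega)
      have hmX : (X * fibPoly (n+1+1)).Monic := monic_X.mul hm1
      have hdX : (X * fibPoly (n+1+1)).degree = ((n+2 : ℕ) : WithBot ℕ) := by
        rw [degree_mul, degree_X, hd1]
        norm_cast
        omega
      have hlt : (fibPoly (n+1)).degree < (X * fibPoly (n+1+1)).degree := by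
        rw [hdX, hd0]; exact_mod_cast by omega
      constructor
      · rw [fibS]
        exact hmX.add_of_left hlt
      · rw [fibS, degree_add_eq_left_of_degree_lt hlt, hdX]

lemma fib_monic (n : ℕ) : (fibPoly (n+1)).Monic := (fib_monic_deg n).1

lemma fib_deg_lt (n : ℕ) : (fibPoly n).degree < (n : WithBot ℕ) := by
  match n with
  | 0 => simp [fib0]
  | (n+1) =>
    rw [(fib_monic_deg n).2]
    exact_mod_cast by omega

lemma fib_step (k a : ℕ) : fibPoly (a + 2*(2*k+1)) =
    (fibPoly (2*k+2) + fibPoly (2*k)) * fibPoly (a + (2*k+1)) + fibPoly a := by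
  induction a using Nat.strong_induction_on with
  | _ a ih =>
    match a with
    | 0 =>
      rw [fib0, add_zero]
      linear_combination fib_two_mul (2*k)
        + congrArg fibPoly (show 0 + 2*(2*k+1) = 2*(2*k+1) by omega)
        + (fibPoly (2*k+2) + fibPoly (2*k)) * congrArg fibPoly (show 2*k+1 = 0+(2*k+1) by omega)
    | 1 =>
      rw [fib1]
      have hs : ((-1 : Polynomial ℤ))^(2*k) = 1 := by
        rw [pow_mul]; norm_num
      linear_combination fib_two_mul_add_one (2*k) + hs
        + congrArg fibPoly (show 1 + 2*(2*k+1) = 2*(2*k+1)+1 by omega)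
        + (fibPoly (2*k+2) + fibPoly (2*k)) * congrArg fibPoly (show 2*k+2 = 1+(2*k+1) by omega)
    | (a+2) =>
      have h0 := ih a (by omega)
      have h1 := ih (a+1) (by omega)
      linear_combination X * h1 + h0 + congrArg fibPoly (show a+2+2*(2*k+1) = a+2*(2*k+1)+2 by omega)
        + fibS (a + 2*(2*k+1)) - X * congrArg fibPoly (show a+1+2*(2*k+1) = a+2*(2*k+1)+1 by omega)
        - (fibPoly (2*k+2) + fibPoly (2*k)) * fibS (a + (2*k+1))
        + (fibPoly (2*k+2) + fibPoly (2*k)) * congrArg fibPoly (show a+(2*k+1)+2 = a+2+(2*k+1) by omega)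
        + (fibPoly (2*k+2) + fibPoly (2*k)) * X * congrArg fibPoly (show a+1+(2*k+1) = a+(2*k+1)+1 by omega)
        - fibS a

lemma fib_mul_comp (k : ℕ) : ∀ n : ℕ, fibPoly ((2*k+1) * n) =
    fibPoly (2*k+1) * (fibPoly n).comp (fibPoly (2*k+2) + fibPoly (2*k)) := by
  intro n
  induction n using Nat.strong_induction_on with
  | _ n ih =>
    match n with
    | 0 => simp [fib0]
    | 1 => simp [fib1]
    | (n+2) =>
      have h0 := ih n (by omega)
      have h1 := ih (n+1) (by omega)
      rw [fibS, add_comp, mul_comp, X_comp]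
      linear_combination (fibPoly (2*k+2) + fibPoly (2*k)) * h1 + h0
        + congrArg fibPoly (show (2*k+1)*(n+2) = (2*k+1)*n + 2*(2*k+1) by ring)
        + fib_step k ((2*k+1)*n)
        + (fibPoly (2*k+2) + fibPoly (2*k)) * congrArg fibPoly (show (2*k+1)*n + (2*k+1) = (2*k+1)*(n+1) by ring)

lemma L_monic (k : ℕ) : (fibPoly (2*k+2) + fibPoly (2*k)).Monic := by
  have h1 : (fibPoly (2*k+1+1)).Monic := fib_monic (2*k+1)
  have hd1 : (fibPoly (2*k+1+1)).degree = ((2*k+1 : ℕ) : WithBot ℕ) := (fib_monic_deg (2*k+1)).2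
  have e : (2*k+2) = (2*k+1+1) := by omega
  rw [e]
  refine h1.add_of_left ?_
  rw [hd1]
  exact lt_of_lt_of_le (fib_deg_lt (2*k)) (by exact_mod_cast by omega)

lemma L_natDegree (k : ℕ) : (fibPoly (2*k+2) + fibPoly (2*k)).natDegree = 2*k+1 := by
  have hd1 : (fibPoly (2*k+1+1)).degree = ((2*k+1 : ℕ) : WithBot ℕ) := (fib_monic_deg (2*k+1)).2
  have e : (2*k+2) = (2*k+1+1) := by omega
  have hlt : (fibPoly (2*k)).degree < (fibPoly (2*k+1+1)).degree := by
    rw [hd1]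
    exact lt_of_lt_of_le (fib_deg_lt (2*k)) (by exact_mod_cast by omega)
  rw [e]
  have := degree_add_eq_left_of_degree_lt hlt
  apply natDegree_eq_of_degree_eq_some
  rw [this, hd1]

lemma divisors_filter_not_dvd (p n : ℕ) (hp : p.Prime) (hn : 1 ≤ n) :
    (p*n).divisors.filter (fun e => ¬ p ∣ e) = n.divisors.filter (fun e => ¬ p ∣ e) := by
  ext e
  simp only [Finset.mem_filter, Nat.mem_divisors]
  constructor
  · rintro ⟨⟨he, -⟩, hpe⟩
    refine ⟨⟨?_, by omega⟩, hpe⟩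
    exact (Nat.Coprime.dvd_of_dvd_mul_left
      (Nat.Coprime.symm ((Nat.Prime.coprime_iff_not_dvd hp).mpr hpe)) he)
  · rintro ⟨⟨he, -⟩, hpe⟩
    exact ⟨⟨he.mul_left p, Nat.mul_ne_zero hp.pos.ne' (by omega)⟩, hpe⟩

lemma divisors_filter_dvd (p n : ℕ) (hp : p.Prime) (hn : 1 ≤ n) :
    (p*n).divisors.filter (fun e => p ∣ e) = n.divisors.image (fun d => p * d) := by
  ext e
  simp only [Finset.mem_filter, Nat.mem_divisors, Finset.mem_image]
  constructor
  · rintro ⟨⟨he, -⟩, d, rfl⟩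
    exact ⟨d, ⟨(mul_dvd_mul_iff_left (by exact_mod_cast hp.ne_zero : (p:ℕ) ≠ 0)).mp he,
      by omega⟩, by ring⟩
  · rintro ⟨d, ⟨hd, -⟩, rfl⟩
    exact ⟨⟨by exact mul_dvd_mul_left p hd, Nat.mul_ne_zero hp.pos.ne' (by omega)⟩, ⟨d, by ring⟩⟩

lemma key_lemma (Ψ : ℕ → Polynomial ℤ) (hΨ1 : Ψ 1 = 1)
    (hΨmonic : ∀ n, 1 ≤ n → (Ψ n).Monic)
    (hΨprod : ∀ n, 1 ≤ n → fibPoly n = ∏ d ∈ n.divisors, Ψ d)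
    (p : ℕ) (hp : p.Prime) (k : ℕ) (hk : p = 2*k+1) :
    ∀ n, 1 ≤ n →
      (Ψ n).comp (fibPoly (2*k+2) + fibPoly (2*k)) * (if n = 1 then fibPoly p else 1)
      = Ψ (p * n) * (if p ∣ n then 1 else Ψ n) := by
  classical
  set L : Polynomial ℤ := fibPoly (2*k+2) + fibPoly (2*k) with hL
  intro n
  induction n using Nat.strong_induction_on with
  | _ n ih =>
    intro hn
    have hn0 : n ≠ 0 := by omega
    have hp1 : 1 ≤ p := hp.one_lt.le.trans' (by omega)
    -- main product identity
    have hmain : ∏ e ∈ (p*n).divisors, Ψ e = fibPoly p * ∏ d ∈ n.divisors, (Ψ d).comp L := by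
      rw [← Polynomial.prod_comp, ← hΨprod n hn, ← hΨprod (p*n) (Nat.one_le_iff_ne_zero.mpr (Nat.mul_ne_zero (by omega) hn0)), hk,
        fib_mul_comp k n]
    -- divisor splitting
    have hsplit : ∏ e ∈ (p*n).divisors, Ψ e =
        (∏ d ∈ n.divisors, Ψ (p*d)) * ∏ d ∈ n.divisors.filter (fun d => ¬ p ∣ d), Ψ d := by
      rw [← Finset.prod_filter_mul_prod_filter_not (p*n).divisors (fun e => p ∣ e) Ψ,
        divisors_filter_dvd p n hp hn, divisors_filter_not_dvd p n hp hn,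
        Finset.prod_image]
      intro a _ b _ hab
      have : p ≠ 0 := by omega
      exact Nat.eq_of_mul_eq_mul_left (by omega) hab
    -- rewrite both sides as products over divisors
    have hFprod : ∏ d ∈ n.divisors, ((Ψ d).comp L * (if d = 1 then fibPoly p else 1))
        = ∏ d ∈ n.divisors, (Ψ (p*d) * (if p ∣ d then 1 else Ψ d)) := by
      rw [Finset.prod_mul_distrib, Finset.prod_mul_distrib,
        Finset.prod_ite_eq' n.divisors 1 (fun _ => fibPoly p)]
      rw [if_pos (Nat.one_mem_divisors.mpr hn0)]
      rw [Finset.prod_ite (fun _ => (1 : Polynomial ℤ)) Ψ, Finset.prod_const_one, one_mul]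
      rw [mul_comm, ← hmain, hsplit]
    -- split off d = n
    rw [← Nat.insert_self_properDivisors hn0,
      Finset.prod_insert Nat.self_notMem_properDivisors,
      Finset.prod_insert Nat.self_notMem_properDivisors] at hFprod
    have hprop : ∀ d ∈ n.properDivisors,
        (Ψ d).comp L * (if d = 1 then fibPoly p else 1)
        = Ψ (p*d) * (if p ∣ d then 1 else Ψ d) := by
      intro d hd
      obtain ⟨hdvd, hlt⟩ := Nat.mem_properDivisors.mp hd
      exact ih d hlt (Nat.pos_of_dvd_of_pos hdvd (by omega))
    rw [Finset.prod_congr rfl hprop] at hFprod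
    have hne : (∏ d ∈ n.properDivisors, (Ψ (p*d) * (if p ∣ d then 1 else Ψ d))) ≠ 0 := by
      rw [Finset.prod_ne_zero_iff]
      intro d hd
      have hd1 : 1 ≤ d := Nat.pos_of_mem_properDivisors hd
      apply mul_ne_zero ((hΨmonic (p*d) (Nat.one_le_iff_ne_zero.mpr (Nat.mul_ne_zero (by omega) (by omega)))).ne_zero)
      split
      · exact one_ne_zero
      · exact (hΨmonic d hd1).ne_zero
    exact mul_right_cancel₀ hne hFprod

theorem fibotomic_pm_dvd
    (Ψ : ℕ → Polynomial ℤ) (hΨ1 : Ψ 1 = 1)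
    (hΨmonic : ∀ n, 1 ≤ n → (Ψ n).Monic)
    (hΨprod : ∀ n, 1 ≤ n → fibPoly n = ∏ d ∈ n.divisors, Ψ d)
    (p m : ℕ) (hp : p.Prime) (hp2 : p ≠ 2) (hm : 2 ≤ m) (hpm : p ∣ m) :
    Ψ (p * m) = (Ψ m).comp (X * Ψ (2 * p)) := by
  obtain ⟨k, hk⟩ := hp.odd_of_ne_two hp2
  set L : Polynomial ℤ := fibPoly (2*k+2) + fibPoly (2*k) with hLdef
  have key := key_lemma Ψ hΨ1 hΨmonic hΨprod p hp k hk
  -- Ψ 2 = X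
  have hΨ2 : Ψ 2 = X := by
    have h2 := hΨprod 2 (by omega)
    rw [Nat.Prime.divisors Nat.prime_two, Finset.prod_pair (by omega), hΨ1, one_mul, fib2] at h2
    exact h2.symm
  -- p ∤ 2
  have hpnd2 : ¬ p ∣ 2 := by
    intro h
    exact hp2 ((Nat.prime_dvd_prime_iff_eq hp Nat.prime_two).mp h)
  -- L = X * Ψ (2*p)
  have hL : X * Ψ (2 * p) = L := by
    have h2 := key 2 (by omega)
    rw [if_neg (by omega), if_neg hpnd2, hΨ2, X_comp, mul_one] at h2
    rw [show 2 * p = p * 2 by ring, hLdef, h2, mul_comm]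
  -- conclude
  have hmm := key m (by omega)
  rw [if_neg (by omega), if_pos hpm, mul_one, mul_one] at hmm
  rw [hL, hLdef] at *
  rw [hmm]
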